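/- arXiv:2204.05413 — 3 statements merged into one kernel-verified Lean document; each statement's English description precedes it below -/
import Mathlib

section
/- Let A > 0, B > 0, K_P ≥ 0, K_I > 0 and r be real numbers. Suppose F, z : ℝ → ℝ are differentiable functions satisfying for all t: z'(t) = r - F(t) and F'(t) = -B·F(t) + A·(K_P·(r - F(t)) + K_I·z(t)). Then F(t) tends to r as t tends to +∞. -/
open Filter

lemma cexp_tendsto_zero {l : ℂ} (hl : l.re < 0) :
    Filter.Tendsto (fun t : ℝ => Complex.exp (l * t)) Filter.atTop (nhds 0) := by
  rw [tendsto_zero_iff_norm_tendsto_zero]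
  have h : ∀ t : ℝ, ‖Complex.exp (l * t)‖ = Real.exp (l.re * t) := by
    intro t
    rw [Complex.norm_exp]
    norm_num [Complex.mul_re]
  simp only [h]
  exact Real.tendsto_exp_atBot.comp ((tendsto_const_mul_atBot_of_neg hl).mpr tendsto_id)

lemma mul_cexp_tendsto_zero {l : ℂ} (hl : l.re < 0) :
    Filter.Tendsto (fun t : ℝ => (t : ℂ) * Complex.exp (l * t)) Filter.atTop (nhds 0) := by
  rw [tendsto_zero_iff_norm_tendsto_zero]
  have key : Filter.Tendsto (fun t : ℝ => t * Real.exp (l.re * t)) Filter.atTop (nhds 0) := by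
    have h1 := Real.tendsto_pow_mul_exp_neg_atTop_nhds_zero 1
    have h2 : Filter.Tendsto (fun t : ℝ => (-l.re) * t) Filter.atTop Filter.atTop :=
      (tendsto_const_mul_atTop_of_pos (by linarith)).mpr tendsto_id
    have h3 := (h1.comp h2).const_mul (-1 / l.re)
    simp only [mul_zero] at h3
    refine h3.congr (fun t => ?_)
    simp only [Function.comp]
    rw [pow_one, show -(-l.re * t) = l.re * t by ring]
    have hlne : l.re ≠ 0 := ne_of_lt hl
    field_simp
  have h : ∀ t : ℝ, t ∈ Set.Ici (0:ℝ) → ‖(t:ℂ) * Complex.exp (l * t)‖ = t * Real.exp (l.re * t) := by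
    intro t ht
    rw [norm_mul]
    simp [Complex.norm_exp, _root_.abs_of_nonneg (Set.mem_Ici.mp ht),
      Complex.mul_re]
  refine key.congr' ?_
  filter_upwards [eventually_ge_atTop (0:ℝ)] with t ht
  exact (h t ht).symm

lemma hasDerivAt_cexp_mul (m : ℂ) (t : ℝ) :
    HasDerivAt (fun s : ℝ => Complex.exp (m * s)) (m * Complex.exp (m * t)) t := by
  have h1 : HasDerivAt (fun s : ℝ => (m * s : ℂ)) m t := by
    simpa using (HasDerivAt.ofReal_comp (hasDerivAt_id t)).const_mul m
  simpa [mul_comm] using h1.cexp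

lemma second_order_decay (b c : ℝ) (hb : 0 < b) (hc : 0 < c)
    (X X' : ℝ → ℂ)
    (hX : ∀ t, HasDerivAt X (X' t) t)
    (hX' : ∀ t, HasDerivAt X' (-(b : ℂ) * X' t - (c : ℂ) * X t) t) :
    Filter.Tendsto X Filter.atTop (nhds 0) := by
  -- the discriminant square root
  set d : ℂ := if 0 ≤ b ^ 2 - 4 * c then ((Real.sqrt (b ^ 2 - 4 * c) : ℝ) : ℂ)
    else Complex.I * ((Real.sqrt (4 * c - b ^ 2) : ℝ) : ℂ) with hd
  have hd2 : d ^ 2 = ((b ^ 2 - 4 * c : ℝ) : ℂ) := by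
    rw [hd]; split_ifs with h
    · rw [← Complex.ofReal_pow]; norm_cast; exact Real.sq_sqrt h
    · rw [mul_pow, Complex.I_sq, ← Complex.ofReal_pow, Real.sq_sqrt (by linarith)]
      push_cast
      ring
  have hdre0 : 0 ≤ d.re := by
    rw [hd]; split_ifs <;> simp [Real.sqrt_nonneg, Complex.mul_re]
  have hdreb : d.re < b := by
    rw [hd]; split_ifs with h
    · simp only [Complex.ofReal_re]
      have h2 : Real.sqrt (b ^ 2 - 4 * c) < Real.sqrt (b ^ 2) :=
        Real.sqrt_lt_sqrt (by linarith) (by linarith)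
      rwa [Real.sqrt_sq hb.le] at h2
    · simpa [Complex.mul_re] using hb
  set l1 : ℂ := (-(b : ℂ) + d) / 2 with hl1
  set l2 : ℂ := (-(b : ℂ) - d) / 2 with hl2
  have hsum : l1 + l2 = -(b : ℂ) := by rw [hl1, hl2]; ring
  have hprod : l1 * l2 = (c : ℂ) := by
    have h : l1 * l2 = ((b : ℂ) ^ 2 - d ^ 2) / 4 := by rw [hl1, hl2]; ring
    rw [h, hd2]; push_cast; ring
  have hre1 : l1.re < 0 := by
    have h : l1 = ((1 / 2 : ℝ) : ℂ) * (-(b : ℂ) + d) := by rw [hl1]; push_cast; ring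
    rw [h, Complex.re_ofReal_mul]
    simp only [Complex.add_re, Complex.neg_re, Complex.ofReal_re]
    nlinarith
  have hre2 : l2.re < 0 := by
    have h : l2 = ((1 / 2 : ℝ) : ℂ) * (-(b : ℂ) - d) := by rw [hl2]; push_cast; ring
    rw [h, Complex.re_ofReal_mul]
    simp only [Complex.sub_re, Complex.neg_re, Complex.ofReal_re]
    nlinarith
  -- g := X' - l2 X  satisfies g' = l1 g
  set g : ℝ → ℂ := fun t => X' t - l2 * X t with hgdef
  have hg : ∀ t, HasDerivAt g (l1 * g t) t := by
    intro t
    have h := (hX' t).sub ((hX t).const_mul l2)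
    refine h.congr_deriv (Eq.symm ?_)
    rw [hgdef]
    simp only
    linear_combination (X' t) * hsum - (X t) * hprod
  have hh : ∀ t, HasDerivAt (fun t => g t * Complex.exp (-l1 * t)) 0 t := by
    intro t
    have h := (hg t).mul (hasDerivAt_cexp_mul (-l1) t)
    refine h.congr_deriv (Eq.symm ?_)
    ring
  have hgt : ∀ t, g t = g 0 * Complex.exp (l1 * t) := by
    intro t
    have hconst : g t * Complex.exp (-l1 * t) = g 0 * Complex.exp (-l1 * (0 : ℝ)) :=
      is_const_of_deriv_eq_zero (fun s => (hh s).differentiableAt)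
        (fun s => (hh s).deriv) t 0
    have he : Complex.exp (-l1 * t) * Complex.exp (l1 * t) = 1 := by
      rw [← Complex.exp_add, show -l1 * (t : ℂ) + l1 * t = 0 by ring, Complex.exp_zero]
    calc g t = g t * Complex.exp (-l1 * t) * Complex.exp (l1 * t) := by
            rw [mul_assoc, he, mul_one]
      _ = g 0 * Complex.exp (l1 * t) := by
            rw [hconst]; norm_num
  -- Y := X * exp(-l2 t) has derivative g0 exp((l1-l2) t)
  set Y : ℝ → ℂ := fun t => X t * Complex.exp (-l2 * t) with hYdef
  have hY : ∀ t : ℝ, HasDerivAt Y (g 0 * Complex.exp ((l1 - l2) * (t : ℂ))) t := by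
    intro t
    have h := (hX t).mul (hasDerivAt_cexp_mul (-l2) t)
    refine h.congr_deriv (Eq.symm ?_)
    rw [show (l1 - l2) * (t : ℂ) = l1 * t + -l2 * t by ring, Complex.exp_add, ← mul_assoc,
      ← hgt t, hgdef]
    ring
  have hXY : ∀ t, X t = Y t * Complex.exp (l2 * t) := by
    intro t
    rw [hYdef]
    simp only
    rw [mul_assoc, ← Complex.exp_add, show -l2 * (t : ℂ) + l2 * t = 0 by ring,
      Complex.exp_zero, mul_one]
  by_cases hdelta : l1 - l2 = 0
  · -- repeated root
    have hphi : ∀ t : ℝ, HasDerivAt (fun t : ℝ => Y t - g 0 * (t : ℂ)) 0 t := by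
      intro t
      have hid : HasDerivAt (fun s : ℝ => (g 0) * (s : ℂ)) (g 0) t := by
        simpa using (HasDerivAt.ofReal_comp (hasDerivAt_id t)).const_mul (g 0)
      have h := (hY t).sub hid
      refine h.congr_deriv (Eq.symm ?_)
      rw [hdelta]
      simp
    have hYt : ∀ t, Y t = Y 0 + g 0 * t := by
      intro t
      have hconst : Y t - g 0 * (t : ℝ) = Y 0 - g 0 * ((0 : ℝ) : ℂ) :=
        is_const_of_deriv_eq_zero (fun s => (hphi s).differentiableAt)
          (fun s => (hphi s).deriv) t 0
      push_cast at hconst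
      linear_combination hconst
    have htend : Filter.Tendsto (fun t : ℝ => Y 0 * Complex.exp (l2 * t)
        + g 0 * ((t : ℂ) * Complex.exp (l2 * t))) Filter.atTop (nhds 0) := by
      have h1 := (cexp_tendsto_zero hre2).const_mul (Y 0)
      have h2 := (mul_cexp_tendsto_zero hre2).const_mul (g 0)
      simpa using h1.add h2
    refine htend.congr (fun t => ?_)
    rw [hXY t, hYt t]
    ring
  · -- distinct roots
    set q : ℂ := g 0 / (l1 - l2) with hq
    have hphi : ∀ t : ℝ,
        HasDerivAt (fun t : ℝ => Y t - q * Complex.exp ((l1 - l2) * (t : ℂ))) 0 t := by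
      intro t
      have h := (hY t).sub ((hasDerivAt_cexp_mul (l1 - l2) t).const_mul q)
      refine h.congr_deriv (Eq.symm ?_)
      rw [hq]
      field_simp
      ring
    have hYt : ∀ t, Y t = (Y 0 - q) + q * Complex.exp ((l1 - l2) * t) := by
      intro t
      have hconst : Y t - q * Complex.exp ((l1 - l2) * (t : ℝ))
          = Y 0 - q * Complex.exp ((l1 - l2) * ((0 : ℝ) : ℂ)) :=
        is_const_of_deriv_eq_zero (fun s => (hphi s).differentiableAt)
          (fun s => (hphi s).deriv) t 0
      rw [show ((l1 - l2) * ((0 : ℝ) : ℂ)) = 0 by push_cast; ring, Complex.exp_zero,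
        mul_one] at hconst
      linear_combination hconst
    have hXt : ∀ t : ℝ, X t = (Y 0 - q) * Complex.exp (l2 * t) + q * Complex.exp (l1 * t) := by
      intro t
      rw [hXY t, hYt t, add_mul, mul_assoc, ← Complex.exp_add,
        show (l1 - l2) * (t : ℂ) + l2 * t = l1 * t by ring]
    have htend : Filter.Tendsto (fun t : ℝ => (Y 0 - q) * Complex.exp (l2 * t)
        + q * Complex.exp (l1 * t)) Filter.atTop (nhds 0) := by
      have h1 := (cexp_tendsto_zero hre2).const_mul (Y 0 - q)
      have h2 := (cexp_tendsto_zero hre1).const_mul q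
      simpa using h1.add h2
    exact htend.congr (fun t => (hXt t).symm)

/-- Time-domain zero steady-state tracking error for a step reference r:
with plant F' = -B·F + A·u and PI control u = K_P·(r - F) + K_I·z,
z' = r - F, the thrust F converges to the reference r. -/
theorem pi_step_reference_tracking
    (A B K_P K_I r : ℝ) (hA : 0 < A) (hB : 0 < B) (hKP : 0 ≤ K_P) (hKI : 0 < K_I)
    (F z : ℝ → ℝ) (hFd : Differentiable ℝ F) (hzd : Differentiable ℝ z)
    (hz : ∀ t, deriv z t = r - F t)
    (hF : ∀ t, deriv F t = -B * F t + A * (K_P * (r - F t) + K_I * z t)) :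
    Filter.Tendsto F Filter.atTop (nhds r) := by
  set b : ℝ := B + A * K_P with hbdef
  set c : ℝ := A * K_I with hcdef
  have hb : 0 < b := by have := mul_nonneg hA.le hKP; rw [hbdef]; linarith
  have hc : 0 < c := by rw [hcdef]; positivity
  set q : ℝ → ℝ := fun t => -B * F t + A * (K_P * (r - F t) + K_I * z t) with hqdef
  have hFq : ∀ t, HasDerivAt F (q t) t := by
    intro t
    have h := (hFd t).hasDerivAt
    rwa [hF t] at h
  have hzq : ∀ t, HasDerivAt z (r - F t) t := by
    intro t
    have h := (hzd t).hasDerivAt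
    rwa [hz t] at h
  have hq : ∀ t, HasDerivAt q (-b * q t + c * (r - F t)) t := by
    intro t
    have h := (HasDerivAt.const_mul (-B) (hFq t)).add
      (HasDerivAt.const_mul A ((HasDerivAt.const_mul K_P ((hFq t).const_sub r)).add
        (HasDerivAt.const_mul K_I (hzq t))))
    refine h.congr_deriv (Eq.symm ?_)
    rw [hbdef, hcdef, hqdef]
    ring
  set X : ℝ → ℂ := fun t => ((F t - r : ℝ) : ℂ) with hXdef
  set X' : ℝ → ℂ := fun t => ((q t : ℝ) : ℂ) with hX'def
  have hX : ∀ t, HasDerivAt X (X' t) t := fun t =>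
    HasDerivAt.ofReal_comp ((hFq t).sub_const r)
  have hX' : ∀ t, HasDerivAt X' (-(b : ℂ) * X' t - (c : ℂ) * X t) t := by
    intro t
    have h := HasDerivAt.ofReal_comp (hq t)
    convert h using 1
    rw [hXdef, hX'def]
    push_cast
    ring
  have hXt := second_order_decay b c hb hc X X' hX hX'
  have hre := (Complex.continuous_re.tendsto 0).comp hXt
  simp only [Complex.zero_re] at hre
  have h2 : Filter.Tendsto (fun t => (X t).re + r) Filter.atTop (nhds (0 + r)) :=
    hre.add_const r
  rw [zero_add] at h2
  refine h2.congr (fun t => ?_)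
  rw [hXdef]
  simp
end

section
/- Let A > 0, B > 0, K_P ≥ 0, K_I > 0, r, and d be real numbers. Suppose F, z : ℝ → ℝ are differentiable functions satisfying for all t: z'(t) = r - F(t) and F'(t) = -B·F(t) + A·(K_P·(r - F(t)) + K_I·z(t)) + d. Then F(t) tends to r as t tends to +∞. -/
open Filter Complex


/-- Existence of roots of s² + a s + c with negative real parts. -/
lemma pi_aux_roots (a c : ℝ) (ha : 0 < a) (hc : 0 < c) :
    ∃ lam mu : ℂ, lam + mu = -a ∧ lam * mu = c ∧ lam.re < 0 ∧ mu.re < 0 := by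
  rcases le_or_gt (4 * c) (a ^ 2) with h | h
  · set s := Real.sqrt (a ^ 2 - 4 * c) with hs
    have hs2 : s ^ 2 = a ^ 2 - 4 * c := Real.sq_sqrt (by linarith)
    have hsa : s < a := by
      nlinarith [Real.sqrt_nonneg (a ^ 2 - 4 * c)]
    have hs0 : 0 ≤ s := Real.sqrt_nonneg _
    refine ⟨(((-a + s) / 2 : ℝ) : ℂ), (((-a - s) / 2 : ℝ) : ℂ), ?_, ?_, ?_, ?_⟩
    · push_cast; ring
    · rw [← Complex.ofReal_mul]
      norm_cast
      nlinarith
    · simpa using by linarith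
    · simpa using by linarith
  · set s := Real.sqrt (4 * c - a ^ 2) with hs
    have hs2 : s ^ 2 = 4 * c - a ^ 2 := Real.sq_sqrt (by linarith)
    refine ⟨⟨-a / 2, s / 2⟩, ⟨-a / 2, -s / 2⟩, ?_, ?_, ?_, ?_⟩
    · apply Complex.ext <;> simp <;> ring
    · apply Complex.ext
      · simp only [Complex.mul_re, Complex.ofReal_re, Complex.ofReal_im]
        nlinarith
      · simp [Complex.mul_im]; ring
    · simpa using by linarith
    · simpa using by linarith

/-- Solution of the scalar linear homogeneous ODE over ℂ. -/
lemma pi_aux_linode {m : ℂ} {f : ℝ → ℂ} (hf : ∀ t, HasDerivAt f (m * f t) t) (t : ℝ) :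
    f t = f 0 * Complex.exp (m * t) := by
  set g : ℝ → ℂ := fun t => f t * Complex.exp (-m * t) with hg
  have hgd : ∀ u : ℝ, HasDerivAt g 0 u := by
    intro u
    have he : HasDerivAt (fun u : ℝ => Complex.exp (-m * u)) (-m * Complex.exp (-m * u)) u := by
      have := ((Complex.hasDerivAt_exp (-m * u)).comp u
        (((hasDerivAt_id (u : ℝ)).ofReal_comp).const_mul (-m)))
      simpa [mul_comm, Function.comp_def] using this
    have := (hf u).mul he
    refine this.congr_deriv ?_
    symm
    ring
  have hconst : ∀ u : ℝ, g u = g 0 :=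
    fun u => is_const_of_deriv_eq_zero (fun u => (hgd u).differentiableAt)
      (fun u => (hgd u).deriv) u 0
  have h1 := hconst t
  simp only [hg] at h1
  have h2 : Complex.exp (-m * t) * Complex.exp (m * t) = 1 := by
    rw [← Complex.exp_add]; simp
  calc f t = f t * (Complex.exp (-m * t) * Complex.exp (m * t)) := by rw [h2, mul_one]
    _ = (f t * Complex.exp (-m * t)) * Complex.exp (m * t) := by ring
    _ = f 0 * Complex.exp (m * t) := by rw [h1]; simp

/-- exp(m t) → 0 when Re m < 0. -/
lemma pi_aux_exp_decay {m : ℂ} (hm : m.re < 0) :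
    Tendsto (fun t : ℝ => Complex.exp (m * t)) atTop (nhds 0) := by
  rw [tendsto_zero_iff_norm_tendsto_zero]
  have : (fun t : ℝ => ‖Complex.exp (m * t)‖) = fun t : ℝ => Real.exp (m.re * t) := by
    funext t
    rw [Complex.norm_exp]
    norm_num [Complex.mul_re]
  rw [this]
  have h1 : Tendsto (fun t : ℝ => m.re * t) atTop atBot := by
    have : Tendsto (fun t : ℝ => (-m.re) * t) atTop atTop :=
      Tendsto.const_mul_atTop (by linarith) tendsto_id
    have := tendsto_neg_atTop_atBot.comp this
    refine this.congr fun t => ?_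
    simp [Function.comp]
  exact Real.tendsto_exp_atBot.comp h1

/-- t·exp(m t) → 0 when Re m < 0. -/
lemma pi_aux_texp_decay {m : ℂ} (hm : m.re < 0) :
    Tendsto (fun t : ℝ => (t : ℂ) * Complex.exp (m * t)) atTop (nhds 0) := by
  rw [tendsto_zero_iff_norm_tendsto_zero]
  have key : Tendsto (fun t : ℝ => t * Real.exp (m.re * t)) atTop (nhds 0) := by
    have h1 := (Real.tendsto_pow_mul_exp_neg_atTop_nhds_zero 1).comp
      (tendsto_id.const_mul_atTop (by linarith : (0:ℝ) < -m.re))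
    have h2 := h1.const_mul (-m.re)⁻¹
    rw [mul_zero] at h2
    refine h2.congr fun t => ?_
    have hne : m.re ≠ 0 := by linarith
    show (-m.re)⁻¹ * ((-m.re * id t) ^ 1 * Real.exp (-(-m.re * id t))) = t * Real.exp (m.re * t)
    rw [id, pow_one, show -(-m.re * t) = m.re * t by ring]
    field_simp
  have heq : ∀ᶠ t : ℝ in atTop, ‖(t : ℂ) * Complex.exp (m * t)‖ = t * Real.exp (m.re * t) := by
    filter_upwards [eventually_ge_atTop (0:ℝ)] with t ht
    rw [norm_mul, Complex.norm_exp,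
      Complex.norm_real, Real.norm_of_nonneg ht]
    norm_num [Complex.mul_re]
  exact key.congr' (heq.mono fun t h => h.symm)



lemma pi_aux_hasDerivAt_exp (m : ℂ) (t : ℝ) :
    HasDerivAt (fun u : ℝ => Complex.exp (m * u)) (m * Complex.exp (m * t)) t := by
  have := ((Complex.hasDerivAt_exp (m * t)).comp t
    (((hasDerivAt_id (t : ℝ)).ofReal_comp).const_mul m))
  simpa [mul_comm, Function.comp_def] using this

lemma pi_aux_const {f : ℝ → ℂ} (hf : ∀ t, HasDerivAt f 0 t) (t : ℝ) : f t = f 0 :=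
  is_const_of_deriv_eq_zero (fun u => (hf u).differentiableAt) (fun u => (hf u).deriv) t 0



/-- Constant-disturbance rejection by integral action: with plant
F' = -B·F + A·u + d, PI control u = K_P·(r - F) + K_I·z, z' = r - F,
the thrust F converges to the reference r. -/
theorem pi_step_disturbance_rejection
    (A B K_P K_I r d : ℝ) (hA : 0 < A) (hB : 0 < B) (hKP : 0 ≤ K_P) (hKI : 0 < K_I)
    (F z : ℝ → ℝ) (hFd : Differentiable ℝ F) (hzd : Differentiable ℝ z)
    (hz : ∀ t, deriv z t = r - F t)
    (hF : ∀ t, deriv F t = -B * F t + A * (K_P * (r - F t) + K_I * z t) + d) :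
    Filter.Tendsto F Filter.atTop (nhds r) := by

  set a : ℝ := B + A * K_P with ha_def
  set c : ℝ := A * K_I with hc_def
  have ha : 0 < a := add_pos_of_pos_of_nonneg hB (by positivity)
  have hc : 0 < c := mul_pos hA hKI
  have hcne : c ≠ 0 := ne_of_gt hc
  obtain ⟨lam, mu, hsum, hprod, hlre, hmre⟩ := pi_aux_roots a c ha hc
  have hac : (a : ℂ) = -(lam + mu) := by rw [hsum]; ring
  have hcc : (c : ℂ) = lam * mu := hprod.symm
  set x : ℝ → ℝ := fun t => F t - r with hx_def
  set w : ℝ → ℝ := fun t => z t + (d - B * r) / c with hw_def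
  have hxd : ∀ t, HasDerivAt x (c * w t - a * x t) t := by
    intro t
    have h1 : HasDerivAt x (deriv F t) t := (hFd t).hasDerivAt.sub_const r
    convert h1 using 1
    rw [hF t]
    simp only [hx_def, hw_def, ha_def, hc_def]
    field_simp
    ring
  have hwd : ∀ t, HasDerivAt w (-(x t)) t := by
    intro t
    have h1 : HasDerivAt w (deriv z t) t := (hzd t).hasDerivAt.add_const _
    convert h1 using 1
    rw [hz t]
    simp only [hx_def]
    ring
  set X : ℝ → ℂ := fun t => ((x t : ℝ) : ℂ) with hX_def
  set W : ℝ → ℂ := fun t => ((w t : ℝ) : ℂ) with hW_def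
  have hXd : ∀ t, HasDerivAt X ((c : ℂ) * W t - (a : ℂ) * X t) t := by
    intro t
    have := (hxd t).ofReal_comp
    convert this using 1
    simp only [hX_def, hW_def]
    push_cast
    ring
  have hWd : ∀ t, HasDerivAt W (-(X t)) t := by
    intro t
    have := (hwd t).ofReal_comp
    convert this using 1
    simp only [hX_def]
    push_cast
    ring
  set g : ℝ → ℂ := fun t => (c : ℂ) * W t + mu * X t with hg_def
  have hgd : ∀ t, HasDerivAt g (mu * g t) t := by
    intro t
    have := ((hWd t).const_mul (c : ℂ)).add ((hXd t).const_mul mu)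
    refine this.congr_deriv ?_
    symm
    simp only [hg_def]
    rw [hac, hcc]
    ring
  have hgsol : ∀ t, g t = g 0 * Complex.exp (mu * t) := pi_aux_linode hgd
  have hXd' : ∀ t, HasDerivAt X (lam * X t + g 0 * Complex.exp (mu * t)) t := by
    intro t
    convert hXd t using 1
    rw [← hgsol t]
    simp only [hg_def]
    rw [hac, hcc]
    ring
  set Y : ℝ → ℂ := fun t => X t * Complex.exp (-lam * t) with hY_def
  have hYd : ∀ t : ℝ, HasDerivAt Y (g 0 * Complex.exp ((mu - lam) * t)) t := by
    intro t
    have := (hXd' t).mul (pi_aux_hasDerivAt_exp (-lam) t)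
    refine this.congr_deriv ?_
    symm
    have hee : Complex.exp (mu * t) * Complex.exp (-lam * t) = Complex.exp ((mu - lam) * t) := by
      rw [← Complex.exp_add]; ring_nf
    linear_combination (-(g 0)) * hee
  have hXY : ∀ t, X t = Y t * Complex.exp (lam * t) := by
    intro t
    simp only [hY_def]
    rw [mul_assoc, ← Complex.exp_add]
    simp
  have hXlim : Tendsto X atTop (nhds 0) := by
    by_cases hml : mu = lam
    · -- double root case
      have hYd' : ∀ t : ℝ, HasDerivAt (fun u : ℝ => Y u - g 0 * u) 0 t := by
        intro t
        have h2 : HasDerivAt (fun u : ℝ => (g 0) * (u : ℂ)) (g 0) t := by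
          simpa using ((hasDerivAt_id t).ofReal_comp).const_mul (g 0)
        have := (hYd t).sub h2
        refine this.congr_deriv ?_
        symm
        rw [hml]
        simp
      have hconst := pi_aux_const hYd'
      have hYt : ∀ t : ℝ, Y t = Y 0 + g 0 * t := by
        intro t
        have := hconst t
        have h0 : Y 0 - g 0 * (0 : ℝ) = Y 0 := by simp
        rw [h0] at this
        linear_combination this
      have hlim : Tendsto (fun t : ℝ => Y 0 * Complex.exp (lam * t)
          + g 0 * ((t : ℂ) * Complex.exp (lam * t))) atTop (nhds 0) := by
        have h1 := (pi_aux_exp_decay hlre).const_mul (Y 0)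
        have h2 := (pi_aux_texp_decay hlre).const_mul (g 0)
        simpa using h1.add h2
      refine hlim.congr fun t => ?_
      rw [hXY t, hYt t]
      ring
    · have hne : mu - lam ≠ 0 := sub_ne_zero.mpr hml
      set k : ℂ := g 0 / (mu - lam) with hk_def
      have hhd : ∀ t : ℝ, HasDerivAt (fun u : ℝ => Y u - k * Complex.exp ((mu - lam) * u)) 0 t := by
        intro t
        have := (hYd t).sub ((pi_aux_hasDerivAt_exp (mu - lam) t).const_mul k)
        refine this.congr_deriv ?_
        symm
        have : k * (mu - lam) = g 0 := by
          rw [hk_def]; field_simp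
        linear_combination (Complex.exp ((mu - lam) * t)) * this
      have hconst := pi_aux_const hhd
      have hYt : ∀ t : ℝ, Y t = (Y 0 - k) + k * Complex.exp ((mu - lam) * t) := by
        intro t
        have := hconst t
        have h0 : Complex.exp ((mu - lam) * (0 : ℝ)) = 1 := by simp
        rw [h0] at this
        linear_combination this
      have hlim : Tendsto (fun t : ℝ => (Y 0 - k) * Complex.exp (lam * t)
          + k * Complex.exp (mu * t)) atTop (nhds 0) := by
        have h1 := (pi_aux_exp_decay hlre).const_mul (Y 0 - k)
        have h2 := (pi_aux_exp_decay hmre).const_mul k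
        simpa using h1.add h2
      refine hlim.congr fun t => ?_
      rw [hXY t, hYt t]
      have hee : Complex.exp ((mu - lam) * t) * Complex.exp (lam * t)
          = Complex.exp (mu * t) := by
        rw [← Complex.exp_add]; ring_nf
      linear_combination (-k) * hee
  have hxlim : Tendsto x atTop (nhds 0) := by
    have := (Complex.continuous_re.tendsto 0).comp hXlim
    simpa [Function.comp_def, hX_def] using this
  have hFlim : Tendsto (fun t => x t + r) atTop (nhds (0 + r)) := hxlim.add_const r
  rw [zero_add] at hFlim
  refine hFlim.congr fun t => ?_
  simp [hx_def]
end

section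
/- Let A > 0, B > 0, K_P ≥ 0, K_I > 0, r be real numbers, and suppose F, z : ℝ → ℝ are differentiable functions satisfying for all t ≥ 0: z'(t) = r - F(t) and F'(t) = -B·F(t) + A·(K_P·(r - F(t)) + K_I·z(t)). Then there exist constants C ≥ 0 and λ > 0 such that |F(t) - r| ≤ C·e^{-λ t} for all t ≥ 0. -/
set_option maxHeartbeats 800000

private lemma pi_aux1 (a b ε x y : ℝ) (hb : 0 < b)
    (hε1 : ε * (a^2+3*b) ≤ 2*a*b) (hεpos : 0 < ε) (hε3 : ε ≤ 2*a/3) :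
    ((1/2) * (2 * x ^ 1 * (-a * x + b * y)) + (b/2) * (2 * y ^ 1 * (-x))
      - ε * ((-a * x + b * y) * y + x * (-x)))
      + ε * ((1/2) * x^2 + (b/2) * y^2 - ε * (x * y)) ≤ 0 := by
  have key : 0 ≤ ε * ((a - ε) * x - b * y)^2 := by positivity
  have h1 : 0 ≤ (2*a*b - ε*(a^2+3*b)) * x^2 := mul_nonneg (by linarith) (sq_nonneg _)
  have h2 : 0 ≤ ε * ε * (2*a - ε) * x^2 :=
    mul_nonneg (mul_nonneg (mul_nonneg hεpos.le hεpos.le) (by linarith)) (sq_nonneg _)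
  have h2b : (0:ℝ) < 2*b := by linarith
  rw [← mul_le_mul_iff_right₀ h2b, mul_zero]
  nlinarith [key, h1, h2]

private lemma pi_aux2 (b ε x y : ℝ) (hb : 0 < b) (hε2 : ε^2 ≤ b/4) :
    x^2 ≤ 4 * ((1/2) * x^2 + (b/2) * y^2 - ε * (x * y)) := by
  nlinarith [sq_nonneg (x - 2*ε*y),
    mul_nonneg (by nlinarith [hε2, hb] : (0:ℝ) ≤ 2*b - 4*ε^2) (sq_nonneg y)]

/-- Exponential convergence of the thrust tracking error: since the closed-loop
characteristic polynomial s² + (B + K_P·A)s + K_I·A is Hurwitz, there exist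
C ≥ 0 and λ > 0 with |F(t) - r| ≤ C·exp(-λ·t) for all t ≥ 0. -/
theorem pi_exponential_convergence
    (A B K_P K_I r : ℝ) (hA : 0 < A) (hB : 0 < B) (hKP : 0 ≤ K_P) (hKI : 0 < K_I)
    (F z : ℝ → ℝ) (hFd : Differentiable ℝ F) (hzd : Differentiable ℝ z)
    (hz : ∀ t, 0 ≤ t → deriv z t = r - F t)
    (hF : ∀ t, 0 ≤ t → deriv F t = -B * F t + A * (K_P * (r - F t) + K_I * z t)) :
    ∃ C : ℝ, 0 ≤ C ∧ ∃ l : ℝ, 0 < l ∧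
      ∀ t, 0 ≤ t → |F t - r| ≤ C * Real.exp (-l * t) := by
  set a : ℝ := B + A * K_P with ha_def
  set b : ℝ := A * K_I with hb_def
  have hb : 0 < b := mul_pos hA hKI
  have ha : 0 < a := by have := mul_nonneg hA.le hKP; linarith
  set ε : ℝ := min (2*a*b/(a^2+3*b)) (Real.sqrt b / 2) with hε_def
  have hεpos : 0 < ε := by
    apply lt_min
    · positivity
    · positivity
  have hε1 : ε * (a^2 + 3*b) ≤ 2*a*b := by
    have h := min_le_left (2*a*b/(a^2+3*b)) (Real.sqrt b / 2)
    rw [← hε_def] at h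
    have hpos : (0:ℝ) < a^2 + 3*b := by positivity
    calc ε * (a^2+3*b) ≤ (2*a*b/(a^2+3*b)) * (a^2+3*b) := by
          exact mul_le_mul_of_nonneg_right h hpos.le
      _ = 2*a*b := by field_simp
  have hε2 : ε^2 ≤ b/4 := by
    have h := min_le_right (2*a*b/(a^2+3*b)) (Real.sqrt b / 2)
    rw [← hε_def] at h
    have : ε^2 ≤ (Real.sqrt b / 2)^2 := by
      apply pow_le_pow_left₀ hεpos.le h
    calc ε^2 ≤ (Real.sqrt b / 2)^2 := this
      _ = b/4 := by rw [div_pow, Real.sq_sqrt hb.le]; norm_num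
  have hε3 : ε ≤ 2*a/3 := by nlinarith [sq_nonneg a, hεpos]
  -- error and shifted integrator state
  set e : ℝ → ℝ := fun t => F t - r with he_def
  set w : ℝ → ℝ := fun t => z t - B * r / b with hw_def
  set V : ℝ → ℝ := fun t => (1/2) * (e t)^2 + (b/2) * (w t)^2 - ε * (e t * w t)
    with hV_def
  have hde : ∀ t, 0 ≤ t → HasDerivAt e (-a * e t + b * w t) t := by
    intro t ht
    have h1 : HasDerivAt e (deriv F t) t := (hFd t).hasDerivAt.sub_const r
    have h2 : -a * e t + b * w t = deriv F t := by
      rw [hF t ht]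
      simp only [he_def, hw_def, ha_def, hb_def]
      field_simp
      ring
    rwa [← h2] at h1
  have hdw : ∀ t, 0 ≤ t → HasDerivAt w (-(e t)) t := by
    intro t ht
    have h1 : HasDerivAt w (deriv z t) t := (hzd t).hasDerivAt.sub_const _
    have h2 : -(e t) = deriv z t := by
      rw [hz t ht]; simp only [he_def]; ring
    rwa [← h2] at h1
  have hdV : ∀ t, 0 ≤ t → HasDerivAt V
      ((1/2) * (2 * e t ^ 1 * (-a * e t + b * w t))
        + (b/2) * (2 * w t ^ 1 * (-(e t)))
        - ε * ((-a * e t + b * w t) * w t + e t * (-(e t)))) t := by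
    intro t ht
    have he' := hde t ht
    have hw' := hdw t ht
    exact (((he'.pow 2).const_mul (1/2)).add ((hw'.pow 2).const_mul (b/2))).sub
      ((he'.mul hw').const_mul ε)
  -- the Lyapunov decay: deriv V + ε V ≤ 0 for t ≥ 0
  have hquad : ∀ t, 0 ≤ t →
      ((1/2) * (2 * e t ^ 1 * (-a * e t + b * w t))
        + (b/2) * (2 * w t ^ 1 * (-(e t)))
        - ε * ((-a * e t + b * w t) * w t + e t * (-(e t)))) + ε * V t ≤ 0 := by
    intro t ht
    exact pi_aux1 a b ε (e t) (w t) hb hε1 hεpos hε3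
  -- g = V e^{ε t} is nonincreasing on [0, ∞)
  set g : ℝ → ℝ := fun t => V t * Real.exp (ε * t) with hg_def
  have hcontV : Continuous V := by
    have hFc := hFd.continuous
    have hzc := hzd.continuous
    simp only [hV_def, he_def, hw_def]
    fun_prop
  have hcontg : Continuous g := by
    simp only [hg_def]
    exact hcontV.mul (Real.continuous_exp.comp (continuous_const.mul continuous_id))
  have hdg : ∀ t, 0 ≤ t → HasDerivAt g
      (((1/2) * (2 * e t ^ 1 * (-a * e t + b * w t))
        + (b/2) * (2 * w t ^ 1 * (-(e t)))
        - ε * ((-a * e t + b * w t) * w t + e t * (-(e t)))) * Real.exp (ε * t)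
        + V t * (Real.exp (ε * t) * ε)) t := by
    intro t ht
    have hexp : HasDerivAt (fun t : ℝ => Real.exp (ε * t)) (Real.exp (ε * t) * ε) t := by
      have : HasDerivAt (fun t : ℝ => ε * t) (ε * 1) t := (hasDerivAt_id t).const_mul ε
      simpa using this.exp
    exact (hdV t ht).mul hexp
  have hanti : AntitoneOn g (Set.Ici (0:ℝ)) := by
    apply antitoneOn_of_deriv_nonpos (convex_Ici 0) hcontg.continuousOn
    · intro t ht
      rw [interior_Ici] at ht
      exact ((hdg t (le_of_lt ht)).differentiableAt).differentiableWithinAt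
    · intro t ht
      rw [interior_Ici] at ht
      rw [(hdg t ht.le).deriv]
      have h1 := hquad t ht.le
      have h2 : (0:ℝ) < Real.exp (ε * t) := Real.exp_pos _
      nlinarith [h1, h2]
  have hVbound : ∀ t, 0 ≤ t → V t ≤ V 0 * Real.exp (-ε * t) := by
    intro t ht
    have := hanti (Set.self_mem_Ici) ht ht
    simp only [hg_def, mul_zero, Real.exp_zero, mul_one] at this
    have h4 := mul_le_mul_of_nonneg_right this (Real.exp_pos (-ε * t)).le
    calc V t = V t * Real.exp (ε * t) * Real.exp (-ε * t) := by
          rw [mul_assoc, ← Real.exp_add]; simp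
      _ ≤ V 0 * Real.exp (-ε * t) := h4
  -- lower bound: e t ^ 2 ≤ 4 V t
  have hlow : ∀ t, (e t)^2 ≤ 4 * V t := by
    intro t
    exact pi_aux2 b ε (e t) (w t) hb hε2
  have hV0 : 0 ≤ V 0 := by linarith [hlow 0, sq_nonneg (e 0)]
  refine ⟨2 * Real.sqrt (V 0), by positivity, ε/2, by positivity, ?_⟩
  intro t ht
  have h1 : (e t)^2 ≤ 4 * (V 0 * Real.exp (-ε * t)) := by
    linarith [hVbound t ht, hlow t]
  have hE : Real.exp (-(ε/2) * t) * Real.exp (-(ε/2) * t) = Real.exp (-ε * t) := by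
    rw [← Real.exp_add]; ring_nf
  have h2 : (2 * Real.sqrt (V 0) * Real.exp (-(ε/2) * t))^2
      = 4 * (V 0 * Real.exp (-ε * t)) := by
    have hs := Real.sq_sqrt hV0
    calc (2 * Real.sqrt (V 0) * Real.exp (-(ε/2) * t))^2
        = 4 * Real.sqrt (V 0)^2 * (Real.exp (-(ε/2) * t) * Real.exp (-(ε/2) * t)) := by
          ring
      _ = 4 * (V 0 * Real.exp (-ε * t)) := by rw [hs, hE]; try ring
  have h3 : |F t - r| = Real.sqrt ((e t)^2) := by
    rw [Real.sqrt_sq_eq_abs]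
  rw [h3]
  calc Real.sqrt ((e t)^2) ≤ Real.sqrt ((2 * Real.sqrt (V 0) * Real.exp (-(ε/2) * t))^2) := by
        apply Real.sqrt_le_sqrt; rw [h2]; exact h1
    _ = 2 * Real.sqrt (V 0) * Real.exp (-(ε/2) * t) := by
        rw [Real.sqrt_sq (by positivity)]
end
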